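/- Let V : ℝ → ℝ be a positive C² function satisfying V''(t) = V(t)·U(t)² where U(t) ≥ ψ₀ t / 2 for all t ≥ T₀ (with ψ₀ > 0, T₀ > 0), and suppose V is bounded on [T₀, ∞). Then there exist constants C, c > 0 such that V(t) ≤ C e^{-c t²} for all t ≥ T₀. -/

import Mathlib

theorem stmt_11 (U V : ℝ → ℝ) (ψ₀ T₀ : ℝ) (hψ₀ : 0 < ψ₀) (hT₀ : 0 < T₀)
    (hV : ContDiff ℝ 2 V)
    (hVpos : ∀ t, 0 < V t)
    (hVbd : ∃ M, ∀ t ≥ T₀, V t ≤ M)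
    (hVeq : ∀ t ≥ T₀, deriv (deriv V) t = V t * (U t) ^ 2)
    (hUlow : ∀ t ≥ T₀, ψ₀ * t / 2 ≤ U t) :
    ∃ C > 0, ∃ c > 0, ∀ t ≥ T₀, V t ≤ C * Real.exp (-c * t ^ 2) := by
  obtain ⟨M, hM⟩ := hVbd
  have hM0 : 0 < M := lt_of_lt_of_le (hVpos T₀) (hM T₀ le_rfl)
  obtain ⟨a, ha⟩ : ∃ a : ℝ, a = ψ₀ / 4 := ⟨_, rfl⟩
  have ha0 : 0 < a := by rw [ha]; positivity
  -- differentiability facts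
  have hVdiff : Differentiable ℝ V := hV.differentiable (by norm_num)
  have h1 : ContDiff ℝ 1 (deriv V) := by
    have := (contDiff_succ_iff_deriv (n := 1)).mp (by exact_mod_cast hV)
    exact this.2.2
  have hdd : Differentiable ℝ (deriv V) := h1.differentiable (by norm_num)
  -- second derivative nonneg on [T₀, ∞), hence deriv V monotone there
  have hdd_nonneg : ∀ t, T₀ ≤ t → 0 ≤ deriv (deriv V) t := by
    intro t ht
    rw [hVeq t ht]
    exact mul_nonneg (hVpos t).le (sq_nonneg _)
  have hmono : MonotoneOn (deriv V) (Set.Ici T₀) := by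
    apply monotoneOn_of_deriv_nonneg (convex_Ici T₀) hdd.continuous.continuousOn
      hdd.differentiableOn
    intro t ht
    rw [interior_Ici] at ht
    exact hdd_nonneg t (le_of_lt ht)
  -- deriv V ≤ 0 on [T₀, ∞)
  have hV'le : ∀ t ≥ T₀, deriv V t ≤ 0 := by
    intro t₀ ht₀
    by_contra hcon
    push_neg at hcon
    obtain ⟨δ, hδ⟩ : ∃ δ, δ = deriv V t₀ := ⟨_, rfl⟩
    rw [← hδ] at hcon
    -- V s - δ s is monotone on [t₀, ∞)
    have hmono2 : MonotoneOn (fun s => V s - δ * s) (Set.Ici t₀) := by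
      apply monotoneOn_of_deriv_nonneg (convex_Ici t₀)
        (by exact (hVdiff.continuous.sub (continuous_const.mul continuous_id)).continuousOn)
        (by exact (hVdiff.sub ((differentiable_id.const_mul δ))).differentiableOn)
      intro s hs
      rw [interior_Ici] at hs
      have hder : HasDerivAt (fun s => V s - δ * s) (deriv V s - δ) s := by
        exact ((hVdiff s).hasDerivAt.sub ((hasDerivAt_id' s).const_mul δ)).congr_deriv (by simp)
      rw [hder.deriv]
      have : δ ≤ deriv V s := by
        rw [hδ]; exact hmono ht₀ (le_trans ht₀ (le_of_lt hs)) (le_of_lt hs)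
      linarith
    obtain ⟨s, hs⟩ : ∃ s : ℝ, s = t₀ + (M - V t₀) / δ + 1 := ⟨_, rfl⟩
    have hdiv : 0 ≤ (M - V t₀) / δ := div_nonneg (by linarith [hM t₀ ht₀]) hcon.le
    have hst : t₀ ≤ s := by rw [hs]; linarith
    have h2 := hmono2 (Set.self_mem_Ici) (Set.mem_Ici.mpr hst) hst
    simp only at h2
    have hMs := hM s (le_trans ht₀ hst)
    have hδs : δ * s = δ * t₀ + (M - V t₀) + δ := by
      rw [hs]
      field_simp
    linarith
  -- the key function F
  obtain ⟨F, hFdef⟩ : ∃ F : ℝ → ℝ, F = fun t => deriv V t + a * t * V t := ⟨_, rfl⟩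
  have hF' : ∀ t, HasDerivAt F (deriv (deriv V) t + (a * V t + a * t * deriv V t)) t := by
    intro t
    rw [hFdef]
    have h2 : HasDerivAt (fun x => a * x) a t := by
      simpa using (hasDerivAt_id t).const_mul a
    have h3 : HasDerivAt (fun x => a * x * V x) (a * V t + a * t * deriv V t) t :=
      h2.mul (hVdiff t).hasDerivAt
    exact ((hdd t).hasDerivAt).add h3
  -- key inequality: F' ≥ a t F on [T₀, ∞)
  have hkey : ∀ t, T₀ ≤ t →
      a * t * F t ≤ deriv (deriv V) t + (a * V t + a * t * deriv V t) := by
    intro t ht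
    have ht0 : 0 < t := lt_of_lt_of_le hT₀ ht
    have hU : ψ₀ * t / 2 ≤ U t := hUlow t ht
    have hU0 : 0 ≤ ψ₀ * t / 2 := by positivity
    have hUsq : (ψ₀ * t / 2) ^ 2 ≤ (U t) ^ 2 := by
      exact pow_le_pow_left₀ hU0 hU 2
    have hVU : V t * (ψ₀ * t / 2) ^ 2 ≤ deriv (deriv V) t := by
      rw [hVeq t ht]
      exact mul_le_mul_of_nonneg_left hUsq (hVpos t).le
    have hVt := hVpos t
    have hpsi : ψ₀ = 4 * a := by rw [ha]; ring
    rw [hpsi] at hVU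
    simp only [hFdef]
    nlinarith [mul_pos ha0 hVt, mul_nonneg (sq_nonneg (a * t)) hVt.le]
  -- exp derivative helper
  have hexp : ∀ (b : ℝ) (t : ℝ), HasDerivAt (fun x => Real.exp (b * x ^ 2 / 2))
      (Real.exp (b * t ^ 2 / 2) * (b * t)) t := by
    intro b t
    have hinner : HasDerivAt (fun x : ℝ => b * x ^ 2 / 2) (b * t) t := by
      have := ((hasDerivAt_pow 2 t).const_mul b).div_const 2
      refine this.congr_deriv ?_
      ring
    exact hinner.exp
  -- G = F * exp(-a t²/2) is monotone on [T₀, ∞)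
  obtain ⟨G, hGdef⟩ : ∃ G : ℝ → ℝ, G = fun t => F t * Real.exp (-a * t ^ 2 / 2) := ⟨_, rfl⟩
  have hG' : ∀ t, HasDerivAt G
      ((deriv (deriv V) t + (a * V t + a * t * deriv V t) - a * t * F t) *
        Real.exp (-a * t ^ 2 / 2)) t := by
    intro t
    rw [hGdef]
    have := (hF' t).mul (hexp (-a) t)
    refine this.congr_deriv ?_
    ring
  have hGmono : MonotoneOn G (Set.Ici T₀) := by
    apply monotoneOn_of_deriv_nonneg (convex_Ici T₀)
      (fun t _ => ((hG' t).differentiableAt.continuousAt).continuousWithinAt)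
      (fun t _ => ((hG' t).differentiableAt).differentiableWithinAt)
    intro t ht
    rw [interior_Ici] at ht
    rw [(hG' t).deriv]
    have h1 := hkey t (le_of_lt ht)
    have h2 := Real.exp_pos (-a * t ^ 2 / 2)
    exact mul_nonneg (by linarith) h2.le
  -- F ≤ 0 on [T₀, ∞)
  have hFle : ∀ t ≥ T₀, F t ≤ 0 := by
    intro t₁ ht₁
    by_contra hcon
    push_neg at hcon
    obtain ⟨ε, hε⟩ : ∃ ε, ε = F t₁ := ⟨_, rfl⟩
    rw [← hε] at hcon
    have ht₁0 : 0 < t₁ := lt_of_lt_of_le hT₀ ht₁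
    obtain ⟨t, htdef⟩ : ∃ t : ℝ, t = t₁ + (2 * M / ε + 1) := ⟨_, rfl⟩
    have hdiv : 0 ≤ 2 * M / ε := div_nonneg (by linarith) hcon.le
    have htt : t₁ ≤ t := by rw [htdef]; linarith
    have htT : T₀ ≤ t := le_trans ht₁ htt
    have ht0 : 0 < t := lt_of_lt_of_le hT₀ htT
    -- from monotonicity of G
    have hGle := hGmono (Set.mem_Ici.mpr ht₁) (Set.mem_Ici.mpr htT) htt
    rw [hGdef] at hGle
    simp only at hGle
    -- hence F t ≥ ε * exp(a(t² - t₁²)/2)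
    have hexp1 : Real.exp (-a * t₁ ^ 2 / 2) = Real.exp (-a * t ^ 2 / 2) *
        Real.exp (a * (t ^ 2 - t₁ ^ 2) / 2) := by
      rw [← Real.exp_add]; ring_nf
    have hep := Real.exp_pos (-a * t ^ 2 / 2)
    have hFt : ε * Real.exp (a * (t ^ 2 - t₁ ^ 2) / 2) ≤ F t := by
      rw [← hε, hexp1] at hGle
      have h5 : ε * Real.exp (a * (t ^ 2 - t₁ ^ 2) / 2) * Real.exp (-a * t ^ 2 / 2)
          ≤ F t * Real.exp (-a * t ^ 2 / 2) := by linarith [hGle]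
      exact le_of_mul_le_mul_right (by linarith) hep
    -- but F t ≤ a t M
    have hFub : F t ≤ a * t * M := by
      have h1 := hV'le t htT
      have h2 : V t ≤ M := hM t htT
      have h3 : a * t * V t ≤ a * t * M :=
        mul_le_mul_of_nonneg_left h2 (by positivity)
      simp only [hFdef]; linarith
    -- exp x ≥ x + 1
    have hx : a * (t ^ 2 - t₁ ^ 2) / 2 + 1 ≤ Real.exp (a * (t ^ 2 - t₁ ^ 2) / 2) :=
      Real.add_one_le_exp _
    have hεx : ε * (a * (t ^ 2 - t₁ ^ 2) / 2 + 1) ≤ ε * Real.exp (a * (t ^ 2 - t₁ ^ 2) / 2) :=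
      mul_le_mul_of_nonneg_left hx hcon.le
    have hεM : 2 * M / ε * ε = 2 * M := div_mul_cancel₀ _ (ne_of_gt hcon)
    -- contradiction: ε * a * (t² - t₁²)/2 ≤ a t M but t - t₁ = 2M/ε + 1
    -- t² - t₁² = (t - t₁)(t + t₁); ε(t - t₁) = 2M + ε
    have hd : ε * (t - t₁) = 2 * M + ε := by
      rw [htdef]
      field_simp
      ring
    have hsum : t + t₁ ≥ t := by linarith
    -- ε * a * (t² - t₁²)/2 = a * (2M + ε) * (t + t₁) / 2 ≥ a * (M + ε/2) * t
    have hfin : ε * (a * (t ^ 2 - t₁ ^ 2) / 2) = a * (2 * M + ε) * (t + t₁) / 2 := by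
      rw [← hd]; ring
    nlinarith [mul_pos ha0 ht0, mul_pos (mul_pos ha0 hcon) ht0,
      mul_pos (mul_pos ha0 hM0) ht₁0, mul_pos (mul_pos ha0 hcon) ht₁0]
  -- conclude: V t * exp(a t²/2) is antitone
  obtain ⟨g, hgdef⟩ : ∃ g : ℝ → ℝ, g = fun t => V t * Real.exp (a * t ^ 2 / 2) := ⟨_, rfl⟩
  have hg' : ∀ t, HasDerivAt g (F t * Real.exp (a * t ^ 2 / 2)) t := by
    intro t
    rw [hgdef]
    have := (hVdiff t).hasDerivAt.mul (hexp a t)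
    refine this.congr_deriv ?_
    simp only [hFdef]; ring
  have hganti : AntitoneOn g (Set.Ici T₀) := by
    apply antitoneOn_of_deriv_nonpos (convex_Ici T₀)
      (fun t _ => ((hg' t).differentiableAt.continuousAt).continuousWithinAt)
      (fun t _ => ((hg' t).differentiableAt).differentiableWithinAt)
    intro t ht
    rw [interior_Ici] at ht
    rw [(hg' t).deriv]
    have h1 := hFle t (le_of_lt ht)
    have h2 := (Real.exp_pos (a * t ^ 2 / 2)).le
    nlinarith [mul_le_mul_of_nonneg_right h1 h2]
  refine ⟨V T₀ * Real.exp (a * T₀ ^ 2 / 2), mul_pos (hVpos T₀) (Real.exp_pos _), a / 2, half_pos ha0, ?_⟩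
  intro t ht
  have hgl := hganti (Set.self_mem_Ici) (Set.mem_Ici.mpr ht) ht
  rw [hgdef] at hgl
  simp only at hgl
  have hep := Real.exp_pos (a * t ^ 2 / 2)
  have hrw : Real.exp (-(a / 2) * t ^ 2) = (Real.exp (a * t ^ 2 / 2))⁻¹ := by
    rw [← Real.exp_neg]
    congr 1
    ring
  rw [hrw, ← div_eq_mul_inv, le_div_iff₀ hep]
  exact hgl
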